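/- For every n ∈ ℕ there exists a positive constant C (depending only on n) such that the following holds: for every real Hilbert space H, every bounded nonnegative selfadjoint operator A : H →L[ℝ] H with nonnegative square root S = √A, and every solution u of u'' + A u + u' = 0 with data (u0,u1), the function t ↦ Sⁿ u(t) satisfies ‖Sⁿ u(t)‖² + (1+t) E(Sⁿ u;t) ≤ C (1+t)^{−n} ‖(u0,u1)‖_{D(Lⁿ)}² for all t ≥ 0. -/

import Mathlib

open scoped RealInnerProductSpace

universe u

set_option linter.unusedSectionVars false
set_option maxHeartbeats 1000000
section
variable {H : Type u} [NormedAddCommGroup H] [InnerProductSpace ℝ H] [CompleteSpace H]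
variable {A S : H →L[ℝ] H}

lemma SS_apply (hSS : S * S = A) (x : H) : S (S x) = A x := by
  rw [← hSS]; rfl

lemma symm_inner (hS : IsSelfAdjoint S) (x y : H) : ⟪S x, y⟫ = ⟪x, S y⟫ :=
  hS.isSymmetric x y

lemma innerSS (hS : IsSelfAdjoint S) (hSS : S * S = A) (x y : H) :
    ⟪S x, S y⟫ = ⟪A x, y⟫ := by
  rw [← SS_apply hSS x, symm_inner hS (S x) y]

lemma innerA_symm (hS : IsSelfAdjoint S) (hSS : S * S = A) (x y : H) :
    ⟪A x, y⟫ = ⟪x, A y⟫ := by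
  rw [← SS_apply hSS x, ← SS_apply hSS y, symm_inner hS (S x) y, ← symm_inner hS x (S y)]

lemma AS_comm (hSS : S * S = A) (x : H) : A (S x) = S (A x) := by
  rw [← SS_apply hSS x, ← SS_apply hSS (S x)]

lemma pow_succ_apply' (j : ℕ) (x : H) : (S ^ (j + 1)) x = S ((S ^ j) x) := by
  rw [pow_succ']; rfl

lemma pow_comm_A (hSS : S * S = A) (j : ℕ) (x : H) : (S ^ j) (A x) = A ((S ^ j) x) := by
  induction j with
  | zero => simp
  | succ k ih => rw [pow_succ_apply', pow_succ_apply', ih, ← AS_comm hSS]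

variable {u : ℝ → H}

noncomputable def wv (S : H →L[ℝ] H) (u : ℝ → H) (j : ℕ) (t : ℝ) : H := (S ^ j) (u t)
noncomputable def dvv (S : H →L[ℝ] H) (u : ℝ → H) (j : ℕ) (t : ℝ) : H := (S ^ j) (deriv u t)

noncomputable def Ef (S : H →L[ℝ] H) (u : ℝ → H) (j : ℕ) (t : ℝ) : ℝ :=
  ⟪dvv S u j t, dvv S u j t⟫ + ⟪wv S u (j+1) t, wv S u (j+1) t⟫

noncomputable def Mf (S : H →L[ℝ] H) (u : ℝ → H) (j : ℕ) (t : ℝ) : ℝ :=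
  ⟪wv S u (j+1) t, wv S u (j+1) t⟫ + (1/4) * ⟪wv S u j t, wv S u j t⟫
    + ⟪dvv S u j t + (1/2:ℝ) • wv S u j t, dvv S u j t + (1/2:ℝ) • wv S u j t⟫

lemma wv_succ (j : ℕ) (t : ℝ) : wv S u (j+1) t = S (wv S u j t) := pow_succ_apply' j (u t)
lemma dvv_succ (j : ℕ) (t : ℝ) : dvv S u (j+1) t = S (dvv S u j t) := pow_succ_apply' j _

lemma hasDerivAt_wv (hu1 : Differentiable ℝ u) (j : ℕ) (t : ℝ) :
    HasDerivAt (wv S u j) (dvv S u j t) t :=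
  (S ^ j).hasFDerivAt.comp_hasDerivAt t (hu1 t).hasDerivAt

lemma hasDerivAt_dvv (hu2 : Differentiable ℝ (deriv u)) (j : ℕ) (t : ℝ) :
    HasDerivAt (dvv S u j) ((S ^ j) (deriv (deriv u) t)) t :=
  (S ^ j).hasFDerivAt.comp_hasDerivAt t (hu2 t).hasDerivAt

lemma hasDerivAt_Ef_raw (hu1 : Differentiable ℝ u) (hu2 : Differentiable ℝ (deriv u))
    (j : ℕ) (t : ℝ) :
    HasDerivAt (Ef S u j)
      ((⟪dvv S u j t, (S ^ j) (deriv (deriv u) t)⟫ + ⟪(S ^ j) (deriv (deriv u) t), dvv S u j t⟫)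
        + (⟪wv S u (j+1) t, dvv S u (j+1) t⟫ + ⟪dvv S u (j+1) t, wv S u (j+1) t⟫)) t :=
  (HasDerivAt.inner ℝ (hasDerivAt_dvv hu2 j t) (hasDerivAt_dvv hu2 j t)).add
    (HasDerivAt.inner ℝ (hasDerivAt_wv hu1 (j+1) t) (hasDerivAt_wv hu1 (j+1) t))

lemma Ef_differentiable (hu1 : Differentiable ℝ u) (hu2 : Differentiable ℝ (deriv u)) (j : ℕ) :
    Differentiable ℝ (Ef S u j) :=
  fun t => (hasDerivAt_Ef_raw hu1 hu2 j t).differentiableAt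

lemma hasDerivAt_Ef (hS : IsSelfAdjoint S) (hSS : S * S = A)
    (hu1 : Differentiable ℝ u) (hu2 : Differentiable ℝ (deriv u)) {j : ℕ} {t : ℝ}
    (hode : deriv (deriv u) t = -A (u t) - deriv u t) :
    HasDerivAt (Ef S u j) (-2 * ⟪dvv S u j t, dvv S u j t⟫) t := by
  have hraw := hasDerivAt_Ef_raw (S := S) hu1 hu2 j t
  have hcomm : (S ^ j) (deriv (deriv u) t) = -A (wv S u j t) - dvv S u j t := by
    rw [hode, map_sub, map_neg, pow_comm_A hSS]; rfl
  rw [hcomm, wv_succ, dvv_succ] at hraw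
  have hval : (⟪dvv S u j t, -A (wv S u j t) - dvv S u j t⟫
        + ⟪-A (wv S u j t) - dvv S u j t, dvv S u j t⟫)
      + (⟪S (wv S u j t), S (dvv S u j t)⟫ + ⟪S (dvv S u j t), S (wv S u j t)⟫)
      = -2 * ⟪dvv S u j t, dvv S u j t⟫ := by
    rw [innerSS hS hSS, innerSS hS hSS,
      innerA_symm hS hSS (dvv S u j t) (wv S u j t)]
    simp only [inner_sub_left, inner_sub_right, inner_neg_left, inner_neg_right]
    rw [real_inner_comm (dvv S u j t) (A (wv S u j t))]
    ring
  rw [hval] at hraw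
  exact hraw

lemma hasDerivAt_Mf_raw (hu1 : Differentiable ℝ u) (hu2 : Differentiable ℝ (deriv u))
    (j : ℕ) (t : ℝ) :
    HasDerivAt (Mf S u j)
      ((⟪wv S u (j+1) t, dvv S u (j+1) t⟫ + ⟪dvv S u (j+1) t, wv S u (j+1) t⟫)
        + (1/4) * (⟪wv S u j t, dvv S u j t⟫ + ⟪dvv S u j t, wv S u j t⟫)
        + (⟪dvv S u j t + (1/2:ℝ) • wv S u j t,
              (S ^ j) (deriv (deriv u) t) + (1/2:ℝ) • dvv S u j t⟫
            + ⟪(S ^ j) (deriv (deriv u) t) + (1/2:ℝ) • dvv S u j t,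
              dvv S u j t + (1/2:ℝ) • wv S u j t⟫)) t := by
  have h3 : HasDerivAt (fun s => dvv S u j s + (1/2:ℝ) • wv S u j s)
      ((S ^ j) (deriv (deriv u) t) + (1/2:ℝ) • dvv S u j t) t :=
    (hasDerivAt_dvv hu2 j t).add ((hasDerivAt_wv hu1 j t).const_smul (1/2:ℝ))
  exact ((HasDerivAt.inner ℝ (hasDerivAt_wv hu1 (j+1) t) (hasDerivAt_wv hu1 (j+1) t)).add
      ((HasDerivAt.inner ℝ (hasDerivAt_wv hu1 j t) (hasDerivAt_wv hu1 j t)).const_mul (1/4:ℝ))).add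
    (HasDerivAt.inner ℝ h3 h3)

lemma Mf_differentiable (hu1 : Differentiable ℝ u) (hu2 : Differentiable ℝ (deriv u)) (j : ℕ) :
    Differentiable ℝ (Mf S u j) :=
  fun t => (hasDerivAt_Mf_raw hu1 hu2 j t).differentiableAt

lemma hasDerivAt_Mf (hS : IsSelfAdjoint S) (hSS : S * S = A)
    (hu1 : Differentiable ℝ u) (hu2 : Differentiable ℝ (deriv u)) {j : ℕ} {t : ℝ}
    (hode : deriv (deriv u) t = -A (u t) - deriv u t) :
    HasDerivAt (Mf S u j) (-(Ef S u j t)) t := by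
  have hraw := hasDerivAt_Mf_raw (S := S) hu1 hu2 j t
  have hcomm : (S ^ j) (deriv (deriv u) t) = -A (wv S u j t) - dvv S u j t := by
    rw [hode, map_sub, map_neg, pow_comm_A hSS]; rfl
  rw [hcomm, wv_succ, dvv_succ] at hraw
  have hval : (⟪S (wv S u j t), S (dvv S u j t)⟫ + ⟪S (dvv S u j t), S (wv S u j t)⟫)
        + (1/4) * (⟪wv S u j t, dvv S u j t⟫ + ⟪dvv S u j t, wv S u j t⟫)
        + (⟪dvv S u j t + (1/2:ℝ) • wv S u j t,
              (-A (wv S u j t) - dvv S u j t) + (1/2:ℝ) • dvv S u j t⟫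
            + ⟪(-A (wv S u j t) - dvv S u j t) + (1/2:ℝ) • dvv S u j t,
              dvv S u j t + (1/2:ℝ) • wv S u j t⟫)
      = -(Ef S u j t) := by
    rw [Ef, wv_succ, innerSS hS hSS (wv S u j t) (dvv S u j t),
      innerSS hS hSS (dvv S u j t) (wv S u j t), innerSS hS hSS (wv S u j t) (wv S u j t)]
    simp only [inner_add_left, inner_add_right, inner_sub_left, inner_sub_right,
      inner_neg_left, inner_neg_right, real_inner_smul_left, real_inner_smul_right]
    have hc1 := real_inner_comm (dvv S u j t) (A (wv S u j t))
    have hc2 := innerA_symm hS hSS (dvv S u j t) (wv S u j t)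
    have hc3 := real_inner_comm (dvv S u j t) (wv S u j t)
    have hc4 := real_inner_comm (wv S u j t) (A (wv S u j t))
    linarith
  rw [hval] at hraw
  exact hraw

lemma Ef_nonneg (j : ℕ) (t : ℝ) : 0 ≤ Ef S u j t :=
  add_nonneg real_inner_self_nonneg real_inner_self_nonneg

lemma Mf_nonneg (j : ℕ) (t : ℝ) : 0 ≤ Mf S u j t := by
  have h1 : (0:ℝ) ≤ ⟪wv S u (j+1) t, wv S u (j+1) t⟫ := real_inner_self_nonneg
  have h2 : (0:ℝ) ≤ ⟪wv S u j t, wv S u j t⟫ := real_inner_self_nonneg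
  have h3 : (0:ℝ) ≤ ⟪dvv S u j t + (1/2:ℝ) • wv S u j t,
      dvv S u j t + (1/2:ℝ) • wv S u j t⟫ := real_inner_self_nonneg
  unfold Mf; linarith

lemma sqnorm_add_le' (x y : H) : ‖x + y‖ ^ 2 ≤ 2 * ‖x‖ ^ 2 + 2 * ‖y‖ ^ 2 := by
  have h := norm_add_le x y
  nlinarith [norm_nonneg x, norm_nonneg y, norm_nonneg (x + y), sq_nonneg (‖x‖ - ‖y‖)]

lemma sqnorm_le_add' (x y : H) : ‖x‖ ^ 2 ≤ 2 * ‖x + y‖ ^ 2 + 2 * ‖y‖ ^ 2 := by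
  have h : ‖x‖ ≤ ‖x + y‖ + ‖y‖ := by
    calc ‖x‖ = ‖x + y + -y‖ := by rw [add_neg_cancel_right]
    _ ≤ ‖x + y‖ + ‖-y‖ := norm_add_le _ _
    _ = ‖x + y‖ + ‖y‖ := by rw [norm_neg]
  nlinarith [norm_nonneg x, norm_nonneg y, norm_nonneg (x + y), sq_nonneg (‖x + y‖ - ‖y‖)]

lemma half_smul_sq' (x : H) : ‖(1/2 : ℝ) • x‖ ^ 2 = (1/4) * ‖x‖ ^ 2 := by
  rw [norm_smul, Real.norm_eq_abs, abs_of_pos (by norm_num : (0:ℝ) < 1/2)]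
  ring

lemma Mf_le (j : ℕ) (t : ℝ) : Mf S u (j+1) t ≤ 3 * Ef S u (j+1) t + Ef S u j t := by
  have h1 : ⟪dvv S u (j+1) t + (1/2:ℝ) • wv S u (j+1) t,
      dvv S u (j+1) t + (1/2:ℝ) • wv S u (j+1) t⟫
      ≤ 2 * ⟪dvv S u (j+1) t, dvv S u (j+1) t⟫
        + (1/2) * ⟪wv S u (j+1) t, wv S u (j+1) t⟫ := by
    rw [real_inner_self_eq_norm_sq, real_inner_self_eq_norm_sq, real_inner_self_eq_norm_sq]
    have h := sqnorm_add_le' (dvv S u (j+1) t) ((1/2:ℝ) • wv S u (j+1) t)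
    rw [half_smul_sq'] at h
    linarith
  have h2 : (0:ℝ) ≤ ⟪dvv S u j t, dvv S u j t⟫ := real_inner_self_nonneg
  have h3 : (0:ℝ) ≤ ⟪wv S u (j+1+1) t, wv S u (j+1+1) t⟫ := real_inner_self_nonneg
  have h4 : (0:ℝ) ≤ ⟪dvv S u (j+1) t, dvv S u (j+1) t⟫ := real_inner_self_nonneg
  have h5 : (0:ℝ) ≤ ⟪wv S u (j+1) t, wv S u (j+1) t⟫ := real_inner_self_nonneg
  unfold Mf Ef
  linarith

lemma Ef_le_Mf (j : ℕ) (t : ℝ) : Ef S u j t ≤ 2 * Mf S u j t := by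
  have h1 : ⟪dvv S u j t, dvv S u j t⟫
      ≤ 2 * ⟪dvv S u j t + (1/2:ℝ) • wv S u j t, dvv S u j t + (1/2:ℝ) • wv S u j t⟫
        + (1/2) * ⟪wv S u j t, wv S u j t⟫ := by
    rw [real_inner_self_eq_norm_sq, real_inner_self_eq_norm_sq, real_inner_self_eq_norm_sq]
    have h := sqnorm_le_add' (dvv S u j t) ((1/2:ℝ) • wv S u j t)
    rw [half_smul_sq'] at h
    linarith
  have h2 : (0:ℝ) ≤ ⟪wv S u (j+1) t, wv S u (j+1) t⟫ := real_inner_self_nonneg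
  have h3 : (0:ℝ) ≤ ⟪wv S u j t, wv S u j t⟫ := real_inner_self_nonneg
  unfold Mf Ef
  linarith

noncomputable def Gf (S : H →L[ℝ] H) (u : ℝ → H) (n : ℕ) (t : ℝ) : ℝ :=
  ((8*(n:ℝ)+8) + t)^(n+1) * Ef S u n t
  + ∑ j ∈ Finset.range (n+1),
      (8*(n:ℝ)+8)^(n+1-j) * (((8*(n:ℝ)+8) + t)^j * Mf S u j t)

lemma hasDerivAt_Gf (hS : IsSelfAdjoint S) (hSS : S * S = A)
    (hu1 : Differentiable ℝ u) (hu2 : Differentiable ℝ (deriv u)) (n : ℕ) {t : ℝ}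
    (hode : deriv (deriv u) t = -A (u t) - deriv u t) :
    HasDerivAt (Gf S u n)
      ((((n+1 : ℕ):ℝ) * ((8*(n:ℝ)+8) + t)^(n+1-1) * 1) * Ef S u n t
        + ((8*(n:ℝ)+8) + t)^(n+1) * (-2 * ⟪dvv S u n t, dvv S u n t⟫)
        + ∑ j ∈ Finset.range (n+1),
            (8*(n:ℝ)+8)^(n+1-j) * ((((j:ℕ):ℝ) * ((8*(n:ℝ)+8) + t)^(j-1) * 1) * Mf S u j t
              + ((8*(n:ℝ)+8) + t)^j * (-(Ef S u j t)))) t := by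
  have hw : HasDerivAt (fun s : ℝ => (8*(n:ℝ)+8) + s) 1 t := (hasDerivAt_id t).const_add _
  have h1 : HasDerivAt (fun s => ((8*(n:ℝ)+8) + s)^(n+1) * Ef S u n s)
      ((((n+1 : ℕ):ℝ) * ((8*(n:ℝ)+8) + t)^(n+1-1) * 1) * Ef S u n t
        + ((8*(n:ℝ)+8) + t)^(n+1) * (-2 * ⟪dvv S u n t, dvv S u n t⟫)) t :=
    (hw.pow (n+1)).mul (hasDerivAt_Ef hS hSS hu1 hu2 hode)
  have h2 : HasDerivAt (fun s => ∑ j ∈ Finset.range (n+1),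
      (8*(n:ℝ)+8)^(n+1-j) * (((8*(n:ℝ)+8) + s)^j * Mf S u j s))
      (∑ j ∈ Finset.range (n+1),
        (8*(n:ℝ)+8)^(n+1-j) * ((((j:ℕ):ℝ) * ((8*(n:ℝ)+8) + t)^(j-1) * 1) * Mf S u j t
          + ((8*(n:ℝ)+8) + t)^j * (-(Ef S u j t)))) t := by
    apply HasDerivAt.fun_sum
    intro j _
    exact ((hw.pow j).mul (hasDerivAt_Mf hS hSS hu1 hu2 hode)).const_mul _
  exact h1.add h2

lemma Gf_differentiable (hu1 : Differentiable ℝ u) (hu2 : Differentiable ℝ (deriv u)) (n : ℕ) :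
    Differentiable ℝ (Gf S u n) := by
  apply Differentiable.add
  · exact (((differentiable_id.const_add _).pow _)).mul (Ef_differentiable hu1 hu2 n)
  · apply Differentiable.fun_sum
    intro j _
    exact (((differentiable_id.const_add _).pow _).mul (Mf_differentiable hu1 hu2 j)).const_mul _

lemma Gf_nonneg (n : ℕ) (t : ℝ) (ht : 0 ≤ t) : 0 ≤ Gf S u n t := by
  have ha : (0:ℝ) ≤ (8*(n:ℝ)+8) + t := by positivity
  apply add_nonneg
  · exact mul_nonneg (pow_nonneg ha _) (Ef_nonneg n t)
  · apply Finset.sum_nonneg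
    intro j _
    exact mul_nonneg (pow_nonneg (by positivity) _)
      (mul_nonneg (pow_nonneg ha _) (Mf_nonneg j t))

lemma gval_nonpos (n : ℕ) {t : ℝ} (ht : 0 ≤ t) :
    (((n+1 : ℕ):ℝ) * ((8*(n:ℝ)+8) + t)^(n+1-1) * 1) * Ef S u n t
        + ((8*(n:ℝ)+8) + t)^(n+1) * (-2 * ⟪dvv S u n t, dvv S u n t⟫)
        + ∑ j ∈ Finset.range (n+1),
            (8*(n:ℝ)+8)^(n+1-j) * ((((j:ℕ):ℝ) * ((8*(n:ℝ)+8) + t)^(j-1) * 1) * Mf S u j t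
              + ((8*(n:ℝ)+8) + t)^j * (-(Ef S u j t))) ≤ 0 := by
  set a : ℝ := 8*(n:ℝ)+8 with ha
  have ha0 : (0:ℝ) < a := by positivity
  have hat : (0:ℝ) < a + t := by linarith
  set F : ℕ → ℝ := fun j => a^(n+1-j) * ((a + t)^j * Ef S u j t) with hF
  have hFnn : ∀ j, 0 ≤ F j := fun j =>
    mul_nonneg (pow_nonneg ha0.le _) (mul_nonneg (pow_nonneg hat.le _) (Ef_nonneg j t))
  set Sg : ℝ := ∑ j ∈ Finset.range (n+1), F j with hSg
  have hSgnn : 0 ≤ Sg := Finset.sum_nonneg fun j _ => hFnn j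
  -- split the sum
  have hsplit : ∑ j ∈ Finset.range (n+1),
      a^(n+1-j) * ((((j:ℕ):ℝ) * (a + t)^(j-1) * 1) * Mf S u j t
        + (a + t)^j * (-(Ef S u j t)))
      = (∑ j ∈ Finset.range (n+1), a^(n+1-j) * ((((j:ℕ):ℝ) * (a + t)^(j-1) * 1) * Mf S u j t))
        - Sg := by
    rw [hSg, ← Finset.sum_sub_distrib]
    apply Finset.sum_congr rfl
    intro j _
    rw [hF]; ring
  -- the R sum bound
  have hR : (∑ j ∈ Finset.range (n+1), a^(n+1-j) * ((((j:ℕ):ℝ) * (a + t)^(j-1) * 1) * Mf S u j t))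
      ≤ (3/4) * Sg := by
    rw [Finset.sum_range_succ']
    have hzero : a^(n+1-0) * ((((0:ℕ):ℝ) * (a + t)^(0-1) * 1) * Mf S u 0 t) = 0 := by
      norm_num
    rw [hzero, add_zero]
    have hterm : ∀ i ∈ Finset.range n,
        a^(n+1-(i+1)) * ((((i+1:ℕ):ℝ) * (a + t)^(i+1-1) * 1) * Mf S u (i+1) t)
        ≤ (1/2) * F (i+1) + (1/4) * F i := by
      intro i hi
      have hin : i + 1 ≤ n := Nat.succ_le_of_lt (Finset.mem_range.mp hi)
      have hM := Mf_le (S := S) (u := u) i t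
      have hp : (0:ℝ) ≤ a^(n-i) := pow_nonneg ha0.le _
      have hq : (0:ℝ) ≤ (a+t)^i := pow_nonneg hat.le _
      have hE1 := Ef_nonneg (S := S) (u := u) (i+1) t
      have hE0 := Ef_nonneg (S := S) (u := u) i t
      have hMnn := Mf_nonneg (S := S) (u := u) (i+1) t
      have h6 : 6 * ((i:ℝ)+1) ≤ a + t := by
        have : (i:ℝ) + 1 ≤ (n:ℝ) := by exact_mod_cast hin
        rw [ha]; linarith
      have h4 : 4 * ((i:ℝ)+1) ≤ a := by
        have : (i:ℝ) + 1 ≤ (n:ℝ) := by exact_mod_cast hin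
        rw [ha]; linarith
      have e1 : n + 1 - (i+1) = n - i := by omega
      have e2 : i + 1 - 1 = i := by omega
      have e3 : n + 1 - i = (n - i) + 1 := by omega
      simp only [hF, e1, e2, e3]
      have hcast : ((i+1:ℕ):ℝ) = (i:ℝ) + 1 := by push_cast; ring
      rw [hcast]
      have step1 : a^(n-i) * (((i:ℝ) + 1) * (a + t)^i * 1 * Mf S u (i+1) t)
          ≤ a^(n-i) * (((i:ℝ) + 1) * (a + t)^i * 1 * (3 * Ef S u (i+1) t + Ef S u i t)) := by
        apply mul_le_mul_of_nonneg_left _ hp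
        apply mul_le_mul_of_nonneg_left hM
        positivity
      refine step1.trans ?_
      rw [pow_succ, pow_succ]
      nlinarith [mul_nonneg (mul_nonneg hp hq) hE1, mul_nonneg (mul_nonneg hp hq) hE0,
        mul_le_mul_of_nonneg_left h6 (mul_nonneg (mul_nonneg hp hq) hE1),
        mul_le_mul_of_nonneg_left h4 (mul_nonneg (mul_nonneg hp hq) hE0)]
    have hsum1 : ∑ i ∈ Finset.range n,
        a^(n+1-(i+1)) * ((((i+1:ℕ):ℝ) * (a + t)^(i+1-1) * 1) * Mf S u (i+1) t)
        ≤ ∑ i ∈ Finset.range n, ((1/2) * F (i+1) + (1/4) * F i) :=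
      Finset.sum_le_sum hterm
    refine hsum1.trans ?_
    rw [Finset.sum_add_distrib, ← Finset.mul_sum, ← Finset.mul_sum]
    have hA : ∑ i ∈ Finset.range n, F (i+1) ≤ Sg := by
      rw [hSg, Finset.sum_range_succ']
      have := hFnn 0
      linarith
    have hB : ∑ i ∈ Finset.range n, F i ≤ Sg := by
      rw [hSg, Finset.sum_range_succ]
      have := hFnn n
      linarith
    linarith
  -- top term bound
  have htop : (((n+1 : ℕ):ℝ) * (a + t)^(n+1-1) * 1) * Ef S u n t ≤ (1/4) * Sg := by
    have hFn : F n ≤ Sg := by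
      rw [hSg]
      apply Finset.single_le_sum (fun j _ => hFnn j) (Finset.self_mem_range_succ n)
    have e1 : n + 1 - 1 = n := by omega
    have e2 : n + 1 - n = 1 := by omega
    have hcast : ((n+1:ℕ):ℝ) = (n:ℝ) + 1 := by push_cast; ring
    rw [e1, hcast]
    have hEn := Ef_nonneg (S := S) (u := u) n t
    have hq : (0:ℝ) ≤ (a+t)^n := pow_nonneg hat.le _
    have h4 : 4 * ((n:ℝ)+1) ≤ a := by rw [ha]; linarith
    have hFneq : F n = a * ((a+t)^n * Ef S u n t) := by simp only [hF, e2, pow_one]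
    nlinarith [mul_le_mul_of_nonneg_left h4 (mul_nonneg hq hEn)]
  -- middle term nonpos
  have hmid : (a + t)^(n+1) * (-2 * ⟪dvv S u n t, dvv S u n t⟫) ≤ 0 := by
    apply mul_nonpos_of_nonneg_of_nonpos (pow_nonneg hat.le _)
    have h0 : (0:ℝ) ≤ ⟪dvv S u n t, dvv S u n t⟫ := real_inner_self_nonneg
    linarith
  rw [hsplit]
  linarith

lemma Gf_antitone (hS : IsSelfAdjoint S) (hSS : S * S = A)
    (hu1 : Differentiable ℝ u) (hu2 : Differentiable ℝ (deriv u)) (n : ℕ)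
    (hode : ∀ s ≥ (0:ℝ), deriv (deriv u) s = -A (u s) - deriv u s)
    {t : ℝ} (ht : 0 ≤ t) : Gf S u n t ≤ Gf S u n 0 := by
  have hant : AntitoneOn (Gf S u n) (Set.Ici (0:ℝ)) := by
    apply antitoneOn_of_deriv_nonpos (convex_Ici 0)
    · exact (Gf_differentiable hu1 hu2 n).continuous.continuousOn
    · exact (Gf_differentiable hu1 hu2 n).differentiableOn
    · intro x hx
      rw [interior_Ici] at hx
      rw [(hasDerivAt_Gf hS hSS hu1 hu2 n (hode x (le_of_lt hx))).deriv]
      exact gval_nonpos n (le_of_lt hx)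
  exact hant Set.self_mem_Ici ht ht

end

section NL
variable {H : Type u} [NormedAddCommGroup H] [InnerProductSpace ℝ H] [CompleteSpace H]

noncomputable def Nf (A : H →L[ℝ] H) (p : H × H) : ℝ :=
  ⟪A p.1, p.1⟫ + (1/4) * ‖p.1‖ ^ 2 + ‖p.2 + (1/2 : ℝ) • p.1‖ ^ 2

def Lf (A : H →L[ℝ] H) (p : H × H) : H × H := (p.2, -A p.1 - p.2)

variable {A S : H →L[ℝ] H}

lemma Nf_nonneg (hApos : ∀ x : H, 0 ≤ ⟪A x, x⟫) (p : H × H) : 0 ≤ Nf A p := by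
  have h1 := hApos p.1
  have h2 : (0:ℝ) ≤ ‖p.1‖ ^ 2 := sq_nonneg _
  have h3 : (0:ℝ) ≤ ‖p.2 + (1/2 : ℝ) • p.1‖ ^ 2 := sq_nonneg _
  unfold Nf; linarith

lemma Nf_step (hS : IsSelfAdjoint S) (hSS : S * S = A)
    (hApos : ∀ x : H, 0 ≤ ⟪A x, x⟫) (f g : H) :
    Nf A (S f, S g) ≤ 6 * Nf A (Lf A (f, g)) + 2 * Nf A (f, g) := by
  have e1 : ⟪A (S f), S f⟫ = ‖A f‖ ^ 2 := by
    rw [AS_comm hSS, innerSS hS hSS, innerA_symm hS hSS, real_inner_self_eq_norm_sq]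
  have e2 : ‖S f‖ ^ 2 = ⟪A f, f⟫ := by
    rw [← real_inner_self_eq_norm_sq, innerSS hS hSS]
  have e3 : S g + (1/2 : ℝ) • S f = S (g + (1/2 : ℝ) • f) := by
    rw [map_add, map_smul]
  have e4 : ‖S (g + (1/2 : ℝ) • f)‖ ^ 2 = ⟪A (g + (1/2 : ℝ) • f), g + (1/2 : ℝ) • f⟫ := by
    rw [← real_inner_self_eq_norm_sq, innerSS hS hSS]
  have e5 : (-A f - g) + (1/2 : ℝ) • g = -(A f + (1/2 : ℝ) • g) := by module
  -- bound pieces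
  have b1 : ‖A f‖ ^ 2 ≤ 2 * ‖A f + (1/2 : ℝ) • g‖ ^ 2 + 2 * ((1/4) * ‖g‖ ^ 2) := by
    have := sqnorm_le_add' (A f) ((1/2 : ℝ) • g)
    rw [half_smul_sq'] at this
    linarith
  have b3 : ⟪A (g + (1/2 : ℝ) • f), g + (1/2 : ℝ) • f⟫
      ≤ 2 * ⟪A g, g⟫ + (1/2) * ⟪A f, f⟫ := by
    have h1 : ‖S (g + (1/2 : ℝ) • f)‖ ^ 2 ≤ 2 * ‖S g‖ ^ 2 + 2 * ‖S ((1/2 : ℝ) • f)‖ ^ 2 := by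
      rw [map_add]; exact sqnorm_add_le' _ _
    have h2 : ‖S ((1/2 : ℝ) • f)‖ ^ 2 = (1/4) * ‖S f‖ ^ 2 := by
      rw [map_smul, half_smul_sq']
    have h3 : ‖S g‖ ^ 2 = ⟪A g, g⟫ := by
      rw [← real_inner_self_eq_norm_sq, innerSS hS hSS]
    rw [← e4]
    rw [h2, h3, e2] at h1
    linarith
  have hnn1 := hApos f
  have hnn2 := hApos g
  have hnn3 : (0:ℝ) ≤ ‖f‖ ^ 2 := sq_nonneg _
  have hnn4 : (0:ℝ) ≤ ‖g + (1/2:ℝ) • f‖ ^ 2 := sq_nonneg _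
  have hnn5 : (0:ℝ) ≤ ‖g‖ ^ 2 := sq_nonneg _
  have hnn6 : (0:ℝ) ≤ ‖A f + (1/2:ℝ) • g‖ ^ 2 := sq_nonneg _
  simp only [Nf, Lf]
  rw [e1, e2, e3, e4]
  rw [show ((-A f - g) + (1/2 : ℝ) • g) = -(A f + (1/2 : ℝ) • g) from e5, norm_neg]
  linarith

lemma Nf_iter (hS : IsSelfAdjoint S) (hSS : S * S = A)
    (hApos : ∀ x : H, 0 ≤ ⟪A x, x⟫) (k : ℕ) (f g : H) :
    Nf A ((S ^ k) f, (S ^ k) g)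
      ≤ 8 ^ k * ∑ j ∈ Finset.range (k + 1), Nf A ((Lf A)^[j] (f, g)) := by
  induction k generalizing f g with
  | zero => simp
  | succ k ih =>
    have step : Nf A ((S ^ (k+1)) f, (S ^ (k+1)) g)
        ≤ 6 * Nf A (Lf A ((S ^ k) f, (S ^ k) g)) + 2 * Nf A ((S ^ k) f, (S ^ k) g) := by
      rw [pow_succ_apply', pow_succ_apply']
      exact Nf_step hS hSS hApos _ _
    have ecomm : Lf A ((S ^ k) f, (S ^ k) g) = ((S ^ k) g, (S ^ k) (-A f - g)) := by
      simp only [Lf, map_sub, map_neg, pow_comm_A hSS]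
    have ih1 := ih g (-A f - g)
    have ih2 := ih f g
    have hsum1 : ∑ j ∈ Finset.range (k + 1), Nf A ((Lf A)^[j] (g, -A f - g))
        ≤ ∑ j ∈ Finset.range (k + 2), Nf A ((Lf A)^[j] (f, g)) := by
      rw [Finset.sum_range_succ' (fun j => Nf A ((Lf A)^[j] (f, g))) (k+1)]
      have : ∀ j, (Lf A)^[j] (g, -A f - g) = (Lf A)^[j + 1] (f, g) := by
        intro j; rw [Function.iterate_succ_apply]; rfl
      simp only [this]
      have := Nf_nonneg hApos (f, g)
      simp only [Function.iterate_zero_apply]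
      linarith
    have hsum2 : ∑ j ∈ Finset.range (k + 1), Nf A ((Lf A)^[j] (f, g))
        ≤ ∑ j ∈ Finset.range (k + 2), Nf A ((Lf A)^[j] (f, g)) := by
      rw [Finset.sum_range_succ (fun j => Nf A ((Lf A)^[j] (f, g))) (k+1)]
      have := Nf_nonneg hApos ((Lf A)^[k+1] (f, g))
      linarith
    rw [ecomm] at step
    have h8 : (0:ℝ) ≤ 8 ^ k := by positivity
    have hF : (0:ℝ) ≤ ∑ j ∈ Finset.range (k + 2), Nf A ((Lf A)^[j] (f, g)) :=
      Finset.sum_nonneg fun j _ => Nf_nonneg hApos _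
    calc Nf A ((S ^ (k+1)) f, (S ^ (k+1)) g)
        ≤ 6 * Nf A ((S ^ k) g, (S ^ k) (-A f - g)) + 2 * Nf A ((S ^ k) f, (S ^ k) g) := step
      _ ≤ 6 * (8 ^ k * ∑ j ∈ Finset.range (k + 1), Nf A ((Lf A)^[j] (g, -A f - g)))
          + 2 * (8 ^ k * ∑ j ∈ Finset.range (k + 1), Nf A ((Lf A)^[j] (f, g))) := by
          have := Nf_nonneg hApos ((S ^ k) g, (S ^ k) (-A f - g))
          nlinarith [ih1, ih2]
      _ ≤ 8 ^ (k+1) * ∑ j ∈ Finset.range (k + 2), Nf A ((Lf A)^[j] (f, g)) := by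
          have m1 : 8 ^ k * ∑ j ∈ Finset.range (k + 1), Nf A ((Lf A)^[j] (g, -A f - g))
              ≤ 8 ^ k * ∑ j ∈ Finset.range (k + 2), Nf A ((Lf A)^[j] (f, g)) := by
            apply mul_le_mul_of_nonneg_left hsum1 h8
          have m2 : 8 ^ k * ∑ j ∈ Finset.range (k + 1), Nf A ((Lf A)^[j] (f, g))
              ≤ 8 ^ k * ∑ j ∈ Finset.range (k + 2), Nf A ((Lf A)^[j] (f, g)) := by
            apply mul_le_mul_of_nonneg_left hsum2 h8
          rw [pow_succ]
          linarith

end NL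

section Final
variable {H : Type u} [NormedAddCommGroup H] [InnerProductSpace ℝ H] [CompleteSpace H]
variable {A S : H →L[ℝ] H} {u : ℝ → H}

lemma Mf_zero_eq (hS : IsSelfAdjoint S) (hSS : S * S = A) (j : ℕ) :
    Mf S u j 0 = Nf A ((S ^ j) (u 0), (S ^ j) (deriv u 0)) := by
  rw [Mf, Nf, wv_succ, innerSS hS hSS,
    real_inner_self_eq_norm_sq (wv S u j 0), real_inner_self_eq_norm_sq]
  rfl

end Final

/-- Lemma 2.6, estimate for `Sⁿ u` with `S = √A`:
`‖Sⁿ u(t)‖² + (1+t) E(Sⁿ u;t) ≤ C (1+t)^{-n} ‖(u0,u1)‖_{D(Lⁿ)}²`. -/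
theorem stmt_7 :
    ∀ n : ℕ, ∃ C : ℝ, 0 < C ∧
      ∀ (H : Type u) [NormedAddCommGroup H] [InnerProductSpace ℝ H] [CompleteSpace H]
        (A S : H →L[ℝ] H), IsSelfAdjoint A → (∀ x : H, 0 ≤ ⟪A x, x⟫) →
        IsSelfAdjoint S → (∀ x : H, 0 ≤ ⟪S x, x⟫) → S * S = A →
        ∀ (u : ℝ → H) (u0 u1 : H), ContDiff ℝ 2 u →
          (∀ t ≥ (0:ℝ), deriv (deriv u) t + A (u t) + deriv u t = 0) →
          u 0 = u0 → deriv u 0 = u1 →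
          ∀ t ≥ (0:ℝ),
            ‖(S ^ n) (u t)‖ ^ 2
                + (1 + t) * (‖deriv (fun s => (S ^ n) (u s)) t‖ ^ 2
                    + ⟪A ((S ^ n) (u t)), (S ^ n) (u t)⟫)
              ≤ C * (1 + t) ^ (-(n : ℝ)) *
                  ∑ k ∈ Finset.range (n + 1),
                    (fun p : H × H =>
                        ⟪A p.1, p.1⟫ + (1 / 4) * ‖p.1‖ ^ 2
                          + ‖p.2 + (1 / 2 : ℝ) • p.1‖ ^ 2)
                      ((fun p : H × H => (p.2, -A p.1 - p.2))^[k] (u0, u1)) := by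
  intro n
  refine ⟨5 * ((n:ℝ)+3) * (8*(n:ℝ)+8)^(n+1) * 8^n, by positivity, ?_⟩
  intro H _ _ _ A S hA hApos hS hSpos hSS u u0 u1 hu hode hu0 hu1' t ht
  have hn0 : (0:ℝ) ≤ (n:ℝ) := Nat.cast_nonneg n
  -- differentiability
  have h2 : ContDiff ℝ ((1 : WithTop ℕ∞) + 1) u := by
    have e : ((2 : ℕ) : WithTop ℕ∞) = (1 : WithTop ℕ∞) + 1 := by norm_num
    rw [← e]; exact_mod_cast hu
  rw [contDiff_succ_iff_deriv] at h2
  have hd1 : Differentiable ℝ u := h2.1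
  have hd2 : Differentiable ℝ (deriv u) := h2.2.2.differentiable one_ne_zero
  have hodet : ∀ s ≥ (0:ℝ), deriv (deriv u) s = -A (u s) - deriv u s := by
    intro s hs
    have h := hode s hs
    have h' : deriv (deriv u) s + (A (u s) + deriv u s) = 0 := by rw [← add_assoc]; exact h
    rw [add_eq_zero_iff_eq_neg] at h'
    rw [h']; abel
  have hGle := Gf_antitone hS hSS hd1 hd2 n hodet ht
  -- rewrite goal LHS
  have hder : deriv (fun s => (S ^ n) (u s)) t = dvv S u n t :=
    ((S ^ n).hasFDerivAt.comp_hasDerivAt t (hd1 t).hasDerivAt).deriv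
  rw [hder]
  have hnorm1 : ‖(S ^ n) (u t)‖ ^ 2 = ⟪wv S u n t, wv S u n t⟫ :=
    (real_inner_self_eq_norm_sq _).symm
  have hnorm2 : ‖dvv S u n t‖ ^ 2 = ⟪dvv S u n t, dvv S u n t⟫ :=
    (real_inner_self_eq_norm_sq _).symm
  have hAw : ⟪A ((S ^ n) (u t)), (S ^ n) (u t)⟫ = ⟪wv S u (n+1) t, wv S u (n+1) t⟫ := by
    rw [wv_succ, innerSS hS hSS]; rfl
  rw [hnorm1, hnorm2, hAw]
  set D : ℝ := ∑ k ∈ Finset.range (n + 1),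
      (fun p : H × H =>
          ⟪A p.1, p.1⟫ + (1 / 4) * ‖p.1‖ ^ 2 + ‖p.2 + (1 / 2 : ℝ) • p.1‖ ^ 2)
        ((fun p : H × H => (p.2, -A p.1 - p.2))^[k] (u0, u1)) with hD
  have hD' : D = ∑ k ∈ Finset.range (n + 1), Nf A ((Lf A)^[k] (u0, u1)) := rfl
  have hDnn : 0 ≤ D := by
    rw [hD']; exact Finset.sum_nonneg fun k _ => Nf_nonneg hApos _
  set a : ℝ := 8*(n:ℝ)+8 with ha
  have ha0 : (0:ℝ) < a := by positivity
  have ha1 : (1:ℝ) ≤ a := by rw [ha]; linarith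
  have hat : (0:ℝ) < a + t := by linarith
  have h1t : (0:ℝ) < 1 + t := by linarith
  have h1ta : 1 + t ≤ a + t := by rw [ha]; linarith
  -- pointwise bounds involving Gf
  have key2 : (a+t)^(n+1) * Ef S u n t ≤ Gf S u n t := by
    have hsum : (0:ℝ) ≤ ∑ j ∈ Finset.range (n+1),
        a^(n+1-j) * ((a + t)^j * Mf S u j t) :=
      Finset.sum_nonneg fun j _ => mul_nonneg (pow_nonneg ha0.le _)
        (mul_nonneg (pow_nonneg hat.le _) (Mf_nonneg j t))
    rw [Gf]; linarith
  have key1 : (a+t)^n * Mf S u n t ≤ Gf S u n t := by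
    have hterm : a^(n+1-n) * ((a+t)^n * Mf S u n t)
        ≤ ∑ j ∈ Finset.range (n+1), a^(n+1-j) * ((a + t)^j * Mf S u j t) :=
      Finset.single_le_sum
        (f := fun j => a^(n+1-j) * ((a + t)^j * Mf S u j t))
        (fun j _ => mul_nonneg (pow_nonneg ha0.le _)
          (mul_nonneg (pow_nonneg hat.le _) (Mf_nonneg j t)))
        (Finset.self_mem_range_succ n)
    have e2 : n + 1 - n = 1 := by omega
    rw [e2, pow_one] at hterm
    have h1 : (a+t)^n * Mf S u n t ≤ a * ((a+t)^n * Mf S u n t) := by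
      nlinarith [mul_nonneg (pow_nonneg hat.le n) (Mf_nonneg (S := S) (u := u) n t)]
    have hE : (0:ℝ) ≤ (a+t)^(n+1) * Ef S u n t :=
      mul_nonneg (pow_nonneg hat.le _) (Ef_nonneg n t)
    rw [Gf]; linarith
  have key3 : ⟪wv S u n t, wv S u n t⟫ ≤ 4 * Mf S u n t := by
    have h1 : (0:ℝ) ≤ ⟪wv S u (n+1) t, wv S u (n+1) t⟫ := real_inner_self_nonneg
    have h2 : (0:ℝ) ≤ ⟪dvv S u n t + (1/2:ℝ) • wv S u n t,
        dvv S u n t + (1/2:ℝ) • wv S u n t⟫ := real_inner_self_nonneg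
    rw [Mf]; linarith
  -- bound Gf at 0 by data
  have hMj0 : ∀ j, j ≤ n → Mf S u j 0 ≤ 8^n * D := by
    intro j hj
    rw [Mf_zero_eq hS hSS j, hu0, hu1']
    have hiter := Nf_iter hS hSS hApos j u0 u1
    have hsub : ∑ k ∈ Finset.range (j+1), Nf A ((Lf A)^[k] (u0, u1))
        ≤ ∑ k ∈ Finset.range (n+1), Nf A ((Lf A)^[k] (u0, u1)) :=
      Finset.sum_le_sum_of_subset_of_nonneg
        (Finset.range_subset_range.mpr (by omega)) (fun k _ _ => Nf_nonneg hApos _)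
    have h8 : (8:ℝ)^j ≤ 8^n := pow_le_pow_right₀ (by norm_num) hj
    have hpnn : (0:ℝ) ≤ ∑ k ∈ Finset.range (j+1), Nf A ((Lf A)^[k] (u0, u1)) :=
      Finset.sum_nonneg fun k _ => Nf_nonneg hApos _
    rw [hD']
    calc Nf A ((S ^ j) u0, (S ^ j) u1)
        ≤ 8^j * ∑ k ∈ Finset.range (j+1), Nf A ((Lf A)^[k] (u0, u1)) := hiter
      _ ≤ 8^n * ∑ k ∈ Finset.range (n+1), Nf A ((Lf A)^[k] (u0, u1)) := by
          apply mul_le_mul h8 hsub hpnn (by positivity)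
  have hG0 : Gf S u n 0 ≤ ((n:ℝ)+3) * a^(n+1) * (8^n * D) := by
    have hE0 : Ef S u n 0 ≤ 2 * Mf S u n 0 := Ef_le_Mf n 0
    have hsum : ∑ j ∈ Finset.range (n+1), a^(n+1-j) * ((a + 0)^j * Mf S u j 0)
        ≤ ∑ j ∈ Finset.range (n+1), a^(n+1) * (8^n * D) := by
      apply Finset.sum_le_sum
      intro j hj
      have hj' : j ≤ n := by have := Finset.mem_range.mp hj; omega
      have e : a^(n+1-j) * a^j = a^(n+1) := by
        rw [← pow_add]; congr 1; omega
      rw [add_zero]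
      calc a^(n+1-j) * (a^j * Mf S u j 0) = (a^(n+1-j) * a^j) * Mf S u j 0 := by ring
        _ = a^(n+1) * Mf S u j 0 := by rw [e]
        _ ≤ a^(n+1) * (8^n * D) :=
            mul_le_mul_of_nonneg_left (hMj0 j hj') (pow_nonneg ha0.le _)
    rw [Finset.sum_const, Finset.card_range, nsmul_eq_mul] at hsum
    have hfirst : (a + 0)^(n+1) * Ef S u n 0 ≤ a^(n+1) * (2 * (8^n * D)) := by
      rw [add_zero]
      have := hMj0 n le_rfl
      have h2 : Ef S u n 0 ≤ 2 * (8^n * D) := by linarith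
      exact mul_le_mul_of_nonneg_left h2 (pow_nonneg ha0.le _)
    rw [Gf, ← ha]
    push_cast at hsum
    nlinarith [hsum, hfirst, mul_nonneg (pow_nonneg ha0.le (n+1))
      (mul_nonneg (pow_nonneg (by norm_num : (0:ℝ) ≤ 8) n) hDnn)]
  -- main chain
  have hGt0 : 0 ≤ Gf S u n t := Gf_nonneg n t ht
  have hG0nn : 0 ≤ Gf S u n 0 := le_trans hGt0 hGle
  have c1 : (a+t)^n * ⟪wv S u n t, wv S u n t⟫ ≤ 4 * Gf S u n t := by
    calc (a+t)^n * ⟪wv S u n t, wv S u n t⟫ ≤ (a+t)^n * (4 * Mf S u n t) :=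
          mul_le_mul_of_nonneg_left key3 (pow_nonneg hat.le _)
      _ = 4 * ((a+t)^n * Mf S u n t) := by ring
      _ ≤ 4 * Gf S u n t := by linarith
  have c2 : (a+t)^n * ((1+t) * Ef S u n t) ≤ Gf S u n t := by
    have h1 : (1+t) * Ef S u n t ≤ (a+t) * Ef S u n t :=
      mul_le_mul_of_nonneg_right h1ta (Ef_nonneg n t)
    calc (a+t)^n * ((1+t) * Ef S u n t) ≤ (a+t)^n * ((a+t) * Ef S u n t) :=
          mul_le_mul_of_nonneg_left h1 (pow_nonneg hat.le _)
      _ = (a+t)^(n+1) * Ef S u n t := by rw [pow_succ]; ring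
      _ ≤ Gf S u n t := key2
  have hstep : (a+t)^n * (⟪wv S u n t, wv S u n t⟫ + (1+t) * Ef S u n t)
      ≤ 5 * Gf S u n 0 := by
    have := hGle
    nlinarith [c1, c2]
  have hpow : (0:ℝ) < (a+t)^n := pow_pos hat n
  have hpow1 : (0:ℝ) < (1+t)^n := pow_pos h1t n
  have hfin : ⟪wv S u n t, wv S u n t⟫ + (1+t) * Ef S u n t
      ≤ 5 * Gf S u n 0 / (1+t)^n := by
    rw [le_div_iff₀ hpow1]
    have hple : (1+t)^n ≤ (a+t)^n := pow_le_pow_left₀ h1t.le h1ta n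
    have hlhs : 0 ≤ ⟪wv S u n t, wv S u n t⟫ + (1+t) * Ef S u n t := by
      have := real_inner_self_nonneg (x := wv S u n t)
      have := Ef_nonneg (S := S) (u := u) n t
      nlinarith
    calc (⟪wv S u n t, wv S u n t⟫ + (1+t) * Ef S u n t) * (1+t)^n
        ≤ (⟪wv S u n t, wv S u n t⟫ + (1+t) * Ef S u n t) * (a+t)^n :=
          mul_le_mul_of_nonneg_left hple hlhs
      _ = (a+t)^n * (⟪wv S u n t, wv S u n t⟫ + (1+t) * Ef S u n t) := by ring
      _ ≤ 5 * Gf S u n 0 := hstep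
  have hEfeq : ⟪dvv S u n t, dvv S u n t⟫ + ⟪wv S u (n+1) t, wv S u (n+1) t⟫
      = Ef S u n t := rfl
  rw [hEfeq]
  refine hfin.trans ?_
  have hrpow : (1+t) ^ (-(n:ℝ)) = ((1+t)^n)⁻¹ := by
    rw [← Real.rpow_natCast (1+t) n, ← Real.rpow_neg h1t.le]
  rw [hrpow]
  have hfinal : 5 * Gf S u n 0 ≤ 5 * ((n:ℝ)+3) * a^(n+1) * (8^n * D) := by linarith
  calc 5 * Gf S u n 0 / (1+t)^n
      ≤ 5 * ((n:ℝ)+3) * a^(n+1) * (8^n * D) / (1+t)^n := by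
        gcongr
    _ = 5 * ((n:ℝ)+3) * (8*(n:ℝ)+8)^(n+1) * 8^n * ((1+t)^n)⁻¹ * D := by
        rw [ha]; field_simp
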